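/- arXiv:2505.18407 — 7 statements merged into one kernel-verified Lean document; each statement's English description precedes it below -/
import Mathlib

section
/- Let A be a finite set, π₀ a positive probability distribution on A, η > 0, and r(·;D) a dataset-dependent utility. Suppose A is partitioned into I and its complement Ī such that (1) every a ∈ I has action-dependent sensitivity at most Δ, i.e. |r(a;D) − r(a;D')| ≤ Δ for all D' with ‖D − D'‖₁ ≤ 1, and (2) for every dataset D' with ‖D − D'‖₁ ≤ 1, the total probability that the policy π̃(·;D') (proportional to π₀(a)exp(r(a;D')/η)) assigns to Ī is at most δ₀ < 1. Then for every neighboring dataset D' and every subset S ⊆ A, Pr[π̃(·;D) ∈ S] ≤ (1/(1−δ₀))·exp(2Δ/η)·Pr[π̃(·;D') ∈ S] + δ₀; that is, the sampling mechanism is (2Δ/η − log(1−δ₀), δ₀)-approximately differentially private. -/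
/-- Two datasets (finite multisets) are neighbors if one is obtained from the
other by adding or removing a single element. -/
def Neighbor {Ω : Type*} (D D' : Multiset Ω) : Prop :=
  (∃ x, D' = x ::ₘ D) ∨ (∃ x, D = x ::ₘ D')

/-- Approximate DP of KL-regularized sampling with a set `I` of bounded-sensitivity
actions and low-probability tail `Iᶜ`. -/
theorem stmt1 {A Ω : Type*} [Fintype A] [DecidableEq A]
    (r : A → Multiset Ω → ℝ) (π₀ : A → ℝ) (hπ₀pos : ∀ a, 0 < π₀ a)
    (hπ₀sum : ∑ a, π₀ a = 1) (η : ℝ) (hη : 0 < η)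
    (pol : Multiset Ω → A → ℝ)
    (hpol : ∀ D a, pol D a =
      π₀ a * Real.exp (r a D / η) / ∑ a', π₀ a' * Real.exp (r a' D / η))
    (D : Multiset Ω) (I : Finset A) (Δ δ₀ : ℝ) (hδ₀ : δ₀ < 1)
    (hsens : ∀ a ∈ I, ∀ D' : Multiset Ω, (Neighbor D D' ∨ D' = D) → |r a D - r a D'| ≤ Δ)
    (htail : ∀ D' : Multiset Ω, (Neighbor D D' ∨ D' = D) → ∑ a ∈ Iᶜ, pol D' a ≤ δ₀) :
    ∀ D' : Multiset Ω, Neighbor D D' → ∀ S : Finset A,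
      ∑ a ∈ S, pol D a ≤
        (1 / (1 - δ₀)) * Real.exp (2 * Δ / η) * ∑ a ∈ S, pol D' a + δ₀ := by
  intro D' hD' S
  set w : Multiset Ω → A → ℝ := fun E a => π₀ a * Real.exp (r a E / η) with hw
  set Z : Multiset Ω → ℝ := fun E => ∑ a, w E a with hZ
  have hδpos : (0:ℝ) < 1 - δ₀ := by linarith
  have hwpos : ∀ E a, 0 < w E a := fun E a => mul_pos (hπ₀pos a) (Real.exp_pos _)
  have hAne : (Finset.univ : Finset A).Nonempty := by
    rcases (Finset.univ : Finset A).eq_empty_or_nonempty with h | h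
    · rw [h] at hπ₀sum; simp at hπ₀sum
    · exact h
  have hZpos : ∀ E, 0 < Z E := fun E => Finset.sum_pos (fun a _ => hwpos E a) hAne
  have hpoleq : ∀ E a, pol E a = w E a / Z E := fun E a => hpol E a
  have hpolpos : ∀ E a, 0 < pol E a := by
    intro E a; rw [hpoleq]; exact div_pos (hwpos E a) (hZpos E)
  have hpolsum : ∀ E, ∑ a, pol E a = 1 := by
    intro E
    simp only [hpoleq]
    rw [← Finset.sum_div, div_self (hZpos E).ne']
  have hE := Real.exp_pos (Δ/η)
  -- ratio bounds for the weights on `I`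
  have hexp : ∀ a ∈ I, w D a ≤ Real.exp (Δ/η) * w D' a ∧
      w D' a ≤ Real.exp (Δ/η) * w D a := by
    intro a ha
    have h := abs_le.mp (hsens a ha D' (Or.inl hD'))
    have key : ∀ x y : ℝ, x ≤ Δ + y →
        π₀ a * Real.exp (x / η) ≤ Real.exp (Δ/η) * (π₀ a * Real.exp (y / η)) := by
      intro x y hxy
      rw [mul_left_comm]
      apply mul_le_mul_of_nonneg_left _ (hπ₀pos a).le
      rw [← Real.exp_add, Real.exp_le_exp, ← add_div]
      exact div_le_div_of_nonneg_right hxy hη.le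
    exact ⟨key _ _ (by linarith [h.1, h.2]), key _ _ (by linarith [h.1, h.2])⟩
  -- the mass of `I` under `pol D'` is at least `1 - δ₀`
  have hIsum : (1 - δ₀) * Z D' ≤ ∑ a ∈ I, w D' a := by
    have hsplit : ∑ a ∈ I, pol D' a + ∑ a ∈ Iᶜ, pol D' a = 1 := by
      rw [Finset.sum_add_sum_compl]; exact hpolsum D'
    have h2 : 1 - δ₀ ≤ ∑ a ∈ I, pol D' a := by
      have := htail D' (Or.inl hD'); linarith
    have h3 : ∑ a ∈ I, pol D' a = (∑ a ∈ I, w D' a) / Z D' := by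
      simp only [hpoleq]; rw [Finset.sum_div]
    rw [h3] at h2
    calc (1 - δ₀) * Z D' ≤ ((∑ a ∈ I, w D' a) / Z D') * Z D' :=
          mul_le_mul_of_nonneg_right h2 (hZpos D').le
      _ = ∑ a ∈ I, w D' a := div_mul_cancel₀ _ (hZpos D').ne'
  -- normalizing-constant comparison
  have hZbound : (1 - δ₀) * Z D' ≤ Real.exp (Δ/η) * Z D := by
    calc (1 - δ₀) * Z D' ≤ ∑ a ∈ I, w D' a := hIsum
      _ ≤ ∑ a ∈ I, Real.exp (Δ/η) * w D a :=
          Finset.sum_le_sum (fun a ha => (hexp a ha).2)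
      _ = Real.exp (Δ/η) * ∑ a ∈ I, w D a := (Finset.mul_sum _ _ _).symm
      _ ≤ Real.exp (Δ/η) * Z D := by
          apply mul_le_mul_of_nonneg_left _ hE.le
          exact Finset.sum_le_sum_of_subset_of_nonneg (Finset.subset_univ I)
            (fun a _ _ => (hwpos D a).le)
  have hinv : 1 / Z D ≤ Real.exp (Δ/η) / ((1 - δ₀) * Z D') := by
    rw [div_le_div_iff₀ (hZpos D) (mul_pos hδpos (hZpos D'))]
    nlinarith [hZbound]
  -- pointwise bound on `I`
  have key : ∀ a ∈ I, pol D a ≤ (1 / (1 - δ₀)) * Real.exp (2 * Δ / η) * pol D' a := by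
    intro a ha
    have h1 := (hexp a ha).1
    rw [hpoleq D a, hpoleq D' a, div_eq_mul_one_div (w D a), div_eq_mul_one_div (w D' a)]
    calc w D a * (1 / Z D)
        ≤ (Real.exp (Δ/η) * w D' a) * (Real.exp (Δ/η) / ((1 - δ₀) * Z D')) :=
          mul_le_mul h1 hinv (one_div_nonneg.mpr (hZpos D).le)
            (mul_nonneg hE.le (hwpos D' a).le)
      _ = (1 / (1 - δ₀)) * Real.exp (2 * Δ / η) * (w D' a * (1 / Z D')) := by
          rw [two_mul, add_div, Real.exp_add]
          field_simp
  -- assemble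
  have hC : (0:ℝ) ≤ (1 / (1 - δ₀)) * Real.exp (2 * Δ / η) :=
    mul_nonneg (by positivity) (Real.exp_pos _).le
  calc ∑ a ∈ S, pol D a
      = ∑ a ∈ S ∩ I, pol D a + ∑ a ∈ S \ I, pol D a :=
        (Finset.sum_inter_add_sum_sdiff S I _).symm
    _ ≤ (1 / (1 - δ₀)) * Real.exp (2 * Δ / η) * ∑ a ∈ S ∩ I, pol D' a
          + ∑ a ∈ Iᶜ, pol D a := by
        apply add_le_add
        · rw [Finset.mul_sum]
          exact Finset.sum_le_sum (fun a ha => key a (Finset.mem_inter.mp ha).2)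
        · exact Finset.sum_le_sum_of_subset_of_nonneg
            (fun a ha => Finset.mem_compl.mpr (Finset.mem_sdiff.mp ha).2)
            (fun a _ _ => (hpolpos D a).le)
    _ ≤ (1 / (1 - δ₀)) * Real.exp (2 * Δ / η) * ∑ a ∈ S, pol D' a + δ₀ := by
        apply add_le_add
        · apply mul_le_mul_of_nonneg_left _ hC
          exact Finset.sum_le_sum_of_subset_of_nonneg (Finset.inter_subset_left)
            (fun a _ _ => (hpolpos D' a).le)
        · exact htail D (Or.inr rfl)
end

section
/- Let π̃ and π̂ be probability distributions on a finite set A such that D_∞(π̃‖π̂) ≤ ε̂ and D_∞(π̂‖π̃) ≤ ε̂, where D_∞(π₁‖π₂) = max_{a∈A} log(π₁(a)/π₂(a)), and this holds for every dataset D. If the mechanism that samples from π̃(·;D) is (ε,δ)-differentially private, then the mechanism that samples from π̂(·;D) is (ε + 2ε̂, e^{ε̂}δ)-differentially private. -/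
/-- Inexact policy optimization: if `πh` is within max-divergence `εh` of the
`(ε,δ)`-DP policy `πt` (for every dataset), then sampling from `πh` is
`(ε + 2εh, e^{εh} δ)`-DP. -/
theorem stmt4 {A Ω : Type*} [Fintype A]
    (πt πh : Multiset Ω → A → ℝ) (εh ε δ : ℝ)
    (hpos1 : ∀ D a, 0 < πt D a) (hpos2 : ∀ D a, 0 < πh D a)
    (hsum1 : ∀ D, ∑ a, πt D a = 1) (hsum2 : ∀ D, ∑ a, πh D a = 1)
    (hdiv1 : ∀ D a, Real.log (πt D a / πh D a) ≤ εh)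
    (hdiv2 : ∀ D a, Real.log (πh D a / πt D a) ≤ εh)
    (hDP : ∀ D D', Neighbor D D' → ∀ S : Finset A,
      ∑ a ∈ S, πt D a ≤ Real.exp ε * ∑ a ∈ S, πt D' a + δ) :
    ∀ D D', Neighbor D D' → ∀ S : Finset A,
      ∑ a ∈ S, πh D a ≤
        Real.exp (ε + 2 * εh) * ∑ a ∈ S, πh D' a + Real.exp εh * δ := by
  intro D D' hN S
  have key1 : ∀ a, πh D a ≤ Real.exp εh * πt D a := by
    intro a
    have h := hdiv2 D a
    have hx : πh D a / πt D a ≤ Real.exp εh := by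
      rw [← Real.exp_log (div_pos (hpos2 D a) (hpos1 D a))]
      exact Real.exp_le_exp.mpr h
    calc πh D a = (πh D a / πt D a) * πt D a := by
          rw [div_mul_cancel₀ _ (hpos1 D a).ne']
      _ ≤ Real.exp εh * πt D a :=
          mul_le_mul_of_nonneg_right hx (hpos1 D a).le
  have key2 : ∀ a, πt D' a ≤ Real.exp εh * πh D' a := by
    intro a
    have h := hdiv1 D' a
    have hx : πt D' a / πh D' a ≤ Real.exp εh := by
      rw [← Real.exp_log (div_pos (hpos1 D' a) (hpos2 D' a))]
      exact Real.exp_le_exp.mpr h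
    calc πt D' a = (πt D' a / πh D' a) * πh D' a := by
          rw [div_mul_cancel₀ _ (hpos2 D' a).ne']
      _ ≤ Real.exp εh * πh D' a :=
          mul_le_mul_of_nonneg_right hx (hpos2 D' a).le
  have h1 : ∑ a ∈ S, πh D a ≤ Real.exp εh * ∑ a ∈ S, πt D a := by
    rw [Finset.mul_sum]
    exact Finset.sum_le_sum fun a _ => key1 a
  have h2 : ∑ a ∈ S, πt D' a ≤ Real.exp εh * ∑ a ∈ S, πh D' a := by
    rw [Finset.mul_sum]
    exact Finset.sum_le_sum fun a _ => key2 a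
  have hdp := hDP D D' hN S
  calc ∑ a ∈ S, πh D a ≤ Real.exp εh * ∑ a ∈ S, πt D a := h1
    _ ≤ Real.exp εh * (Real.exp ε * ∑ a ∈ S, πt D' a + δ) :=
        mul_le_mul_of_nonneg_left hdp (Real.exp_pos εh).le
    _ ≤ Real.exp εh * (Real.exp ε * (Real.exp εh * ∑ a ∈ S, πh D' a) + δ) := by
        apply mul_le_mul_of_nonneg_left _ (Real.exp_pos εh).le
        have := mul_le_mul_of_nonneg_left h2 (Real.exp_pos ε).le
        linarith
    _ = Real.exp (ε + 2 * εh) * ∑ a ∈ S, πh D' a + Real.exp εh * δ := by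
        rw [Real.exp_add, two_mul, Real.exp_add]
        ring
end

section
/- Consider a multi-armed bandit with arm set A, rewards in [0,R], and a dataset D with min_a N(a;D) > 1. Let π̃(a;D) ∝ π₀(a)·exp((r̄(a;D) − β₀/√(N(a;D)))/η) where r̄ is the empirical mean reward, β₀ ≥ 0, η > 0, and π₀ is a positive reference distribution. Then sampling a single action from π̃(·;D) is ε₀-differentially private with ε₀ = (1/η)·(4R/(min_a N(a;D) − 1) + β₀/(min_a N(a;D) − 1)^{3/2}). -/
open scoped Classical

/-- Number of data points in `D` whose arm is `a`. -/
def armCount {A : Type*} [DecidableEq A] (a : A) (D : Multiset (A × ℝ)) : ℕ :=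
  (D.filter (fun p => p.1 = a)).card

/-- Empirical mean reward of arm `a` in dataset `D`. -/
noncomputable def empMean {A : Type*} [DecidableEq A] (a : A) (D : Multiset (A × ℝ)) : ℝ :=
  (D.map (fun p => if p.1 = a then p.2 else 0)).sum / (armCount a D : ℝ)

/-- The pessimistic KL-regularized optimal policy
`π̃(a;D) ∝ π₀(a) exp((r̄(a;D) − β₀/√N(a;D))/η)`. -/
noncomputable def banditPolicy {A : Type*} [Fintype A] [DecidableEq A]
    (π₀ : A → ℝ) (η β₀ : ℝ) (D : Multiset (A × ℝ)) (a : A) : ℝ :=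
  π₀ a * Real.exp ((empMean a D - β₀ / Real.sqrt (armCount a D)) / η) /
    ∑ a', π₀ a' * Real.exp ((empMean a' D - β₀ / Real.sqrt (armCount a' D)) / η)

lemma expMech {A : Type*} [Fintype A] [Nonempty A] (π₀ : A → ℝ) (hπ : ∀ a, 0 < π₀ a)
    (f g : A → ℝ) (c : ℝ) (hfg : ∀ a, f a - g a ≤ c) (hgf : ∀ a, g a - f a ≤ c)
    (S : Finset A) :
    ∑ a ∈ S, π₀ a * Real.exp (f a) / (∑ a', π₀ a' * Real.exp (f a')) ≤
      Real.exp (2*c) * ∑ a ∈ S, π₀ a * Real.exp (g a) / (∑ a', π₀ a' * Real.exp (g a')) := by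
  have hZf : 0 < ∑ a', π₀ a' * Real.exp (f a') :=
    Finset.sum_pos (fun a _ => mul_pos (hπ a) (Real.exp_pos _)) Finset.univ_nonempty
  have hZg : 0 < ∑ a', π₀ a' * Real.exp (g a') :=
    Finset.sum_pos (fun a _ => mul_pos (hπ a) (Real.exp_pos _)) Finset.univ_nonempty
  have hnum : ∑ a ∈ S, π₀ a * Real.exp (f a) ≤ Real.exp c * ∑ a ∈ S, π₀ a * Real.exp (g a) := by
    rw [Finset.mul_sum]
    refine Finset.sum_le_sum fun a _ => ?_
    have : Real.exp (f a) ≤ Real.exp c * Real.exp (g a) := by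
      rw [← Real.exp_add]
      exact Real.exp_le_exp.mpr (by linarith [hfg a])
    calc π₀ a * Real.exp (f a) ≤ π₀ a * (Real.exp c * Real.exp (g a)) :=
          mul_le_mul_of_nonneg_left this (hπ a).le
      _ = Real.exp c * (π₀ a * Real.exp (g a)) := by ring
  have hden : (∑ a', π₀ a' * Real.exp (g a')) ≤ Real.exp c * ∑ a', π₀ a' * Real.exp (f a') := by
    rw [Finset.mul_sum]
    refine Finset.sum_le_sum fun a _ => ?_
    have : Real.exp (g a) ≤ Real.exp c * Real.exp (f a) := by
      rw [← Real.exp_add]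
      exact Real.exp_le_exp.mpr (by linarith [hgf a])
    calc π₀ a * Real.exp (g a) ≤ π₀ a * (Real.exp c * Real.exp (f a)) :=
          mul_le_mul_of_nonneg_left this (hπ a).le
      _ = Real.exp c * (π₀ a * Real.exp (f a)) := by ring
  have hnumg0 : 0 ≤ ∑ a ∈ S, π₀ a * Real.exp (g a) :=
    Finset.sum_nonneg fun a _ => (mul_pos (hπ a) (Real.exp_pos _)).le
  rw [← Finset.sum_div, ← Finset.sum_div]
  calc (∑ a ∈ S, π₀ a * Real.exp (f a)) / (∑ a', π₀ a' * Real.exp (f a'))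
      ≤ (Real.exp c * ∑ a ∈ S, π₀ a * Real.exp (g a)) / (∑ a', π₀ a' * Real.exp (f a')) := by
        gcongr
    _ ≤ (Real.exp c * ∑ a ∈ S, π₀ a * Real.exp (g a)) *
          (Real.exp c / (∑ a', π₀ a' * Real.exp (g a'))) := by
        rw [div_eq_mul_inv]
        apply mul_le_mul_of_nonneg_left _ (by positivity)
        rw [inv_eq_one_div, div_le_div_iff₀ hZf hZg]
        linarith
    _ = Real.exp (2*c) * ((∑ a ∈ S, π₀ a * Real.exp (g a)) / (∑ a', π₀ a' * Real.exp (g a'))) := by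
        rw [two_mul, Real.exp_add]; ring


lemma sqrtInvDiff (m : ℝ) (hm : 1 ≤ m) :
    1/Real.sqrt m - 1/Real.sqrt (m+1) ≤ 1/(2 * m ^ ((3:ℝ)/2)) := by
  have hm0 : (0:ℝ) < m := by linarith
  set u := Real.sqrt m with hu_def
  set v := Real.sqrt (m+1) with hv_def
  have hu : 0 < u := Real.sqrt_pos.mpr hm0
  have hv : 0 < v := Real.sqrt_pos.mpr (by linarith)
  have huv : u ≤ v := Real.sqrt_le_sqrt (by linarith)
  have hu2 : u * u = m := Real.mul_self_sqrt hm0.le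
  have hv2 : v * v = m + 1 := Real.mul_self_sqrt (by linarith)
  have hm32 : m ^ ((3:ℝ)/2) = u ^ 3 := by
    rw [hu_def, Real.sqrt_eq_rpow, ← Real.rpow_natCast (m ^ ((1:ℝ)/2)) 3,
      ← Real.rpow_mul hm0.le]
    norm_num
  have h1 : (v - u) * (v + u) = 1 := by nlinarith
  have key : 1/u - 1/v = 1/(u*v*(u+v)) := by
    rw [div_sub_div _ _ hu.ne' hv.ne', one_mul, mul_one]
    rw [div_eq_div_iff (by positivity) (by positivity)]
    linear_combination (u*v) * h1
  rw [key, hm32]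
  apply one_div_le_one_div_of_le (by positivity)
  nlinarith

lemma sumBound {A : Type*} [DecidableEq A] (a : A) (R : ℝ) (D : Multiset (A × ℝ))
    (h : ∀ p ∈ D, p.2 ∈ Set.Icc 0 R) :
    0 ≤ (D.map (fun p => if p.1 = a then p.2 else 0)).sum ∧
      (D.map (fun p => if p.1 = a then p.2 else 0)).sum ≤ ((armCount a D : ℝ)) * R := by
  unfold armCount
  induction D using Multiset.induction with
  | empty => simp
  | cons p D ih =>
    have hp := h p (Multiset.mem_cons_self p D)
    obtain ⟨ih1, ih2⟩ := ih (fun q hq => h q (Multiset.mem_cons_of_mem hq))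
    rw [Multiset.map_cons, Multiset.sum_cons, Multiset.filter_cons]
    by_cases hpa : p.1 = a
    · simp only [hpa, eq_self_iff_true, if_true]
      simp only [Multiset.card_cons, Multiset.card_add, Multiset.card_singleton]
      push_cast
      constructor
      · nlinarith [hp.1, hp.2, ih1]
      · nlinarith [hp.1, hp.2, ih1, ih2]
    · simp only [if_neg hpa]
      simpa using ⟨ih1, ih2⟩


lemma scoreDiffBound (R β₀ K m S r : ℝ) (hβ₀ : 0 ≤ β₀) (hR : 0 ≤ R) (hK : 1 ≤ K)
    (hKm : K ≤ m) (hS0 : 0 ≤ S) (hSM : S ≤ m * R) (hr : 0 ≤ r) (hrR : r ≤ R) :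
    |((r + S)/(m+1) - β₀ / Real.sqrt (m+1)) - (S/m - β₀ / Real.sqrt m)| ≤
      2*R/K + β₀/(2*K^((3:ℝ)/2)) := by
  have hK0 : (0:ℝ) < K := by linarith
  have hK32 : (0:ℝ) < K ^ ((3:ℝ)/2) := Real.rpow_pos_of_pos hK0 _
  have hm1 : 1 ≤ m := hK.trans hKm
  have hm0 : 0 < m := by linarith
  have hsqnn : 0 ≤ 1/Real.sqrt m - 1/Real.sqrt (m+1) := by
    have h1 : Real.sqrt m ≤ Real.sqrt (m+1) := Real.sqrt_le_sqrt (by linarith)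
    have h2 : 0 < Real.sqrt m := Real.sqrt_pos.mpr hm0
    have := one_div_le_one_div_of_le h2 h1
    linarith
  have heq : ((r + S)/(m+1) - β₀ / Real.sqrt (m+1)) - (S/m - β₀ / Real.sqrt m) =
      ((r + S)/(m+1) - S/m) + β₀ * (1/Real.sqrt m - 1/Real.sqrt (m+1)) := by ring
  rw [heq]
  have hX : |(r + S)/(m+1) - S/m| ≤ R/(m+1) := by
    have heq2 : (r + S)/(m+1) - S/m = (m * r - S)/(m*(m+1)) := by
      field_simp
      ring
    rw [heq2, abs_div, abs_of_pos (show (0:ℝ) < m*(m+1) by nlinarith)]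
    have hnum : |m * r - S| ≤ m * R := by
      rw [abs_le]
      constructor
      · nlinarith
      · nlinarith
    calc |m * r - S| / (m*(m+1)) ≤ (m*R) / (m*(m+1)) := by gcongr
      _ = R/(m+1) := by rw [mul_div_mul_left _ _ hm0.ne']
  have hY : β₀ * (1/Real.sqrt m - 1/Real.sqrt (m+1)) ≤ β₀/(2*K^((3:ℝ)/2)) := by
    have h1 := sqrtInvDiff m hm1
    have hm32 : (0:ℝ) < m ^ ((3:ℝ)/2) := Real.rpow_pos_of_pos hm0 _
    have h2 : (1:ℝ)/(2 * m ^ ((3:ℝ)/2)) ≤ 1/(2*K^((3:ℝ)/2)) := by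
      apply one_div_le_one_div_of_le (by linarith)
      have := Real.rpow_le_rpow hK0.le hKm (by norm_num : (0:ℝ) ≤ (3:ℝ)/2)
      linarith
    calc β₀ * (1/Real.sqrt m - 1/Real.sqrt (m+1)) ≤ β₀ * (1/(2*K^((3:ℝ)/2))) := by
          apply mul_le_mul_of_nonneg_left _ hβ₀
          linarith
      _ = β₀/(2*K^((3:ℝ)/2)) := by ring
  calc |((r + S)/(m+1) - S/m) + β₀ * (1/Real.sqrt m - 1/Real.sqrt (m+1))|
      ≤ |(r + S)/(m+1) - S/m| + |β₀ * (1/Real.sqrt m - 1/Real.sqrt (m+1))| := abs_add_le _ _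
    _ = |(r + S)/(m+1) - S/m| + β₀ * (1/Real.sqrt m - 1/Real.sqrt (m+1)) := by
        rw [abs_of_nonneg (mul_nonneg hβ₀ hsqnn)]
    _ ≤ R/(m+1) + β₀/(2*K^((3:ℝ)/2)) := add_le_add hX hY
    _ ≤ 2*R/K + β₀/(2*K^((3:ℝ)/2)) := by
        have h1 : R/(m+1) ≤ R/K := by gcongr; linarith
        have h2 : (0:ℝ) ≤ R/K := div_nonneg hR hK0.le
        have h3 : 2*R/K = R/K + R/K := by ring
        linarith

lemma consScoreBound {A : Type*} [DecidableEq A] (R β₀ : ℝ) (hβ₀ : 0 ≤ β₀) (hR : 0 ≤ R)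
    (D : Multiset (A × ℝ)) (hrew : ∀ p ∈ D, p.2 ∈ Set.Icc 0 R) (x : A × ℝ)
    (hx : x.2 ∈ Set.Icc 0 R) (a : A) (K : ℝ) (hK : 1 ≤ K) (hKa : K ≤ (armCount a D : ℝ)) :
    |(empMean a (x ::ₘ D) - β₀ / Real.sqrt (armCount a (x ::ₘ D))) -
      (empMean a D - β₀ / Real.sqrt (armCount a D))| ≤
      2*R/K + β₀/(2*K^((3:ℝ)/2)) := by
  have hK0 : (0:ℝ) < K := by linarith
  have hK32 : (0:ℝ) < K ^ ((3:ℝ)/2) := Real.rpow_pos_of_pos hK0 _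
  by_cases hax : x.1 = a
  · have hc : armCount a (x ::ₘ D) = armCount a D + 1 := by
      simp [armCount, Multiset.filter_cons, hax]
    obtain ⟨hS0, hSM⟩ := sumBound a R D hrew
    have hE' : empMean a (x ::ₘ D) =
        (x.2 + (D.map (fun p => if p.1 = a then p.2 else 0)).sum) / ((armCount a D : ℝ) + 1) := by
      rw [empMean, hc, Multiset.map_cons, Multiset.sum_cons, if_pos hax]
      push_cast
      rfl
    have hE : empMean a D =
        (D.map (fun p => if p.1 = a then p.2 else 0)).sum / (armCount a D : ℝ) := rfl
    rw [hE', hE, hc]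
    push_cast
    exact scoreDiffBound _ _ _ _ _ _ hβ₀ hR hK hKa hS0 hSM hx.1 hx.2
  · have hc : armCount a (x ::ₘ D) = armCount a D := by
      simp [armCount, Multiset.filter_cons, hax]
    have hm : empMean a (x ::ₘ D) = empMean a D := by
      rw [empMean, empMean, hc, Multiset.map_cons, Multiset.sum_cons, if_neg hax, zero_add]
    rw [hc, hm]
    have h1 : (0:ℝ) ≤ 2*R/K := div_nonneg (by linarith) hK0.le
    have h2 : (0:ℝ) ≤ β₀/(2*K^((3:ℝ)/2)) := div_nonneg hβ₀ (by linarith)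
    simpa using by linarith

/-- Pure DP for multi-armed bandits with full coverage: sampling one action from
the pessimistic KL-regularized policy is `ε₀`-DP with
`ε₀ = (1/η)(4R/(min_a N(a;D)−1) + β₀/(min_a N(a;D)−1)^{3/2})`. -/
theorem stmt7 {A : Type*} [Fintype A] [DecidableEq A] [Nonempty A]
    (R η β₀ : ℝ) (hη : 0 < η) (hβ₀ : 0 ≤ β₀) (π₀ : A → ℝ)
    (hπ₀pos : ∀ a, 0 < π₀ a) (hπ₀sum : ∑ a, π₀ a = 1)
    (D : Multiset (A × ℝ)) (hrew : ∀ p ∈ D, p.2 ∈ Set.Icc 0 R)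
    (Nmin : ℕ) (hNmin : Nmin = Finset.univ.inf' Finset.univ_nonempty fun a => armCount a D)
    (hcov : 1 < Nmin) :
    ∀ D' : Multiset (A × ℝ), Neighbor D D' →
      (∀ p ∈ D', p.2 ∈ Set.Icc 0 R) →
      ∀ S : Finset A,
        (∑ a ∈ S, banditPolicy π₀ η β₀ D a ≤
          Real.exp ((1 / η) * (4 * R / ((Nmin : ℝ) - 1) +
              β₀ / ((Nmin : ℝ) - 1) ^ ((3 : ℝ) / 2))) *
            ∑ a ∈ S, banditPolicy π₀ η β₀ D' a) ∧
        (∑ a ∈ S, banditPolicy π₀ η β₀ D' a ≤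
          Real.exp ((1 / η) * (4 * R / ((Nmin : ℝ) - 1) +
              β₀ / ((Nmin : ℝ) - 1) ^ ((3 : ℝ) / 2))) *
            ∑ a ∈ S, banditPolicy π₀ η β₀ D a) := by
  intro D' hnb hrew' S
  have hNle : ∀ a : A, Nmin ≤ armCount a D := by
    intro a; rw [hNmin]; exact Finset.inf'_le _ (Finset.mem_univ a)
  have hR0 : 0 ≤ R := by
    obtain ⟨a⟩ := (inferInstance : Nonempty A)
    have h1 : 0 < armCount a D := lt_of_lt_of_le (Nat.lt_of_lt_of_le Nat.zero_lt_one hcov.le) (hNle a)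
    have h2 : (D.filter (fun p => p.1 = a)) ≠ 0 := by
      intro h
      rw [armCount, h] at h1
      simp at h1
    obtain ⟨p, hp⟩ := Multiset.exists_mem_of_ne_zero h2
    have hpr := hrew p (Multiset.mem_of_mem_filter hp)
    exact le_trans hpr.1 hpr.2
  have hNR : (2:ℝ) ≤ (Nmin : ℝ) := by exact_mod_cast hcov
  have hK1 : 1 ≤ (Nmin : ℝ) - 1 := by linarith
  have hK0 : (0:ℝ) < (Nmin : ℝ) - 1 := by linarith
  have hK32 : (0:ℝ) < ((Nmin : ℝ) - 1) ^ ((3:ℝ)/2) := Real.rpow_pos_of_pos hK0 _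
  set K := (Nmin : ℝ) - 1 with hK_def
  set c := 2*R/K + β₀/(2*K^((3:ℝ)/2)) with hc_def
  have hdiff : ∀ a : A,
      |(empMean a D - β₀ / Real.sqrt (armCount a D)) -
        (empMean a D' - β₀ / Real.sqrt (armCount a D'))| ≤ c := by
    intro a
    rcases hnb with ⟨x, rfl⟩ | ⟨x, hD⟩
    · rw [abs_sub_comm]
      apply consScoreBound R β₀ hβ₀ hR0 D hrew x (hrew' x (Multiset.mem_cons_self x D)) a K hK1
      have h1 : (Nmin:ℝ) ≤ armCount a D := by exact_mod_cast hNle a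
      linarith
    · have hxD := hrew x (hD ▸ Multiset.mem_cons_self x D')
      have hKa : K ≤ (armCount a D' : ℝ) := by
        have h1 : armCount a (x ::ₘ D') ≤ armCount a D' + 1 := by
          rw [armCount, armCount, Multiset.filter_cons]
          split
          · simp
          · simp [Nat.le_succ]
        have h2 : (Nmin:ℝ) ≤ armCount a D := by exact_mod_cast hNle a
        rw [hD] at h2
        have h3 : (armCount a (x ::ₘ D') : ℝ) ≤ (armCount a D' : ℝ) + 1 := by exact_mod_cast h1
        linarith
      have h := consScoreBound R β₀ hβ₀ hR0 D' hrew' x hxD a K hK1 hKa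
      rw [← hD] at h
      exact h
  have hfg : ∀ a : A,
      (empMean a D - β₀ / Real.sqrt (armCount a D)) / η -
        (empMean a D' - β₀ / Real.sqrt (armCount a D')) / η ≤ c / η := by
    intro a
    rw [div_sub_div_same]
    gcongr
    have := abs_le.mp (hdiff a)
    linarith [this.2]
  have hgf : ∀ a : A,
      (empMean a D' - β₀ / Real.sqrt (armCount a D')) / η -
        (empMean a D - β₀ / Real.sqrt (armCount a D)) / η ≤ c / η := by
    intro a
    rw [div_sub_div_same]
    gcongr
    have := abs_le.mp (hdiff a)
    linarith [this.1]
  have hεeq : Real.exp ((1 / η) * (4 * R / K + β₀ / K ^ ((3 : ℝ) / 2))) =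
      Real.exp (2 * (c / η)) := by
    congr 1
    rw [hc_def]
    field_simp
    ring
  constructor
  · rw [hεeq]
    simp only [banditPolicy]
    exact expMech π₀ hπ₀pos
      (fun a => (empMean a D - β₀ / Real.sqrt (armCount a D)) / η)
      (fun a => (empMean a D' - β₀ / Real.sqrt (armCount a D')) / η)
      (c / η) hfg hgf S
  · rw [hεeq]
    simp only [banditPolicy]
    exact expMech π₀ hπ₀pos
      (fun a => (empMean a D' - β₀ / Real.sqrt (armCount a D')) / η)
      (fun a => (empMean a D - β₀ / Real.sqrt (armCount a D)) / η)
      (c / η) hgf hfg S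
end

section
/- Let λ > 0 and Σ_D = λI + Σ_{i=1}^{n−1} φ_i φ_iᵀ with ‖φ_i‖₂ ≤ 1 for all i, and let b = Σ_i r_i φ_i with r_i ∈ [0,R]. Then bᵀ Σ_D⁻¹ φ ≤ √((n−1)d)·R·‖φ‖_{Σ_D⁻¹} for any vector φ; in particular, since ‖φ_i‖_{Σ_D⁻¹} ≤ 1/√(λ_min(Σ_D)), we get bᵀ Σ_D⁻¹ φ ≤ √((n−1)d/λ_min(Σ_D))·R when ‖φ‖₂ ≤ 1. -/
open Matrix

lemma cs_aux {d : ℕ} {B : Matrix (Fin d) (Fin d) ℝ} (hB : B.PosSemidef) (x y : Fin d → ℝ) :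
    (x ⬝ᵥ (B *ᵥ y)) ^ 2 ≤ (x ⬝ᵥ (B *ᵥ x)) * (y ⬝ᵥ (B *ᵥ y)) := by
  have hBt : Bᵀ = B := by exact isHermitian_iff_isSymm.mp hB.1
  have hsymm : ∀ u v : Fin d → ℝ, u ⬝ᵥ (B *ᵥ v) = v ⬝ᵥ (B *ᵥ u) := by
    intro u v
    rw [dotProduct_mulVec, ← mulVec_transpose, hBt, dotProduct_comm]
  have hpos : ∀ u : Fin d → ℝ, 0 ≤ u ⬝ᵥ (B *ᵥ u) := by
    intro u; simpa using hB.dotProduct_mulVec_nonneg u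
  have key : ∀ t : ℝ, 0 ≤ (y ⬝ᵥ (B *ᵥ y)) * (t * t) + (2 * (x ⬝ᵥ (B *ᵥ y))) * t + x ⬝ᵥ (B *ᵥ x) := by
    intro t
    have h1 := hpos (x + t • y)
    have hexp : (x + t • y) ⬝ᵥ (B *ᵥ (x + t • y)) =
        (y ⬝ᵥ (B *ᵥ y)) * (t * t) + (2 * (x ⬝ᵥ (B *ᵥ y))) * t + x ⬝ᵥ (B *ᵥ x) := by
      rw [mulVec_add, mulVec_smul, add_dotProduct, smul_dotProduct, dotProduct_add,
        dotProduct_add, dotProduct_smul, dotProduct_smul, hsymm y x]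
      simp [smul_eq_mul]; ring
    linarith [hexp ▸ h1]
  have hd := discrim_le_zero key
  rw [discrim] at hd
  nlinarith [hd]

lemma cs_sqrt_aux {d : ℕ} {B : Matrix (Fin d) (Fin d) ℝ} (hB : B.PosSemidef) (x y : Fin d → ℝ) :
    x ⬝ᵥ (B *ᵥ y) ≤ Real.sqrt (x ⬝ᵥ (B *ᵥ x)) * Real.sqrt (y ⬝ᵥ (B *ᵥ y)) := by
  have h := cs_aux hB x y
  have h1 : x ⬝ᵥ (B *ᵥ y) ≤ |x ⬝ᵥ (B *ᵥ y)| := le_abs_self _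
  calc x ⬝ᵥ (B *ᵥ y) ≤ |x ⬝ᵥ (B *ᵥ y)| := h1
    _ = Real.sqrt ((x ⬝ᵥ (B *ᵥ y)) ^ 2) := (Real.sqrt_sq_eq_abs _).symm
    _ ≤ Real.sqrt ((x ⬝ᵥ (B *ᵥ x)) * (y ⬝ᵥ (B *ᵥ y))) := Real.sqrt_le_sqrt h
    _ = Real.sqrt (x ⬝ᵥ (B *ᵥ x)) * Real.sqrt (y ⬝ᵥ (B *ᵥ y)) := Real.sqrt_mul (by simpa using hB.dotProduct_mulVec_nonneg x) _

lemma trace_aux {d : ℕ} (M : Matrix (Fin d) (Fin d) ℝ) (u : Fin d → ℝ) :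
    u ⬝ᵥ (M *ᵥ u) = trace (M * vecMulVec u u) := by
  simp only [trace, diag, mul_apply, vecMulVec_apply, dotProduct, mulVec]
  congr 1; ext i
  simp only [dotProduct, Finset.mul_sum]
  congr 1; ext j; ring

/-- Bound on the ridge-regression term `bᵀ Σ_D⁻¹ φ`. -/
theorem stmt11 {d n : ℕ} (lam R : ℝ) (hlam : 0 < lam)
    (φ : Fin n → Fin d → ℝ) (hφ : ∀ i, φ i ⬝ᵥ φ i ≤ 1)
    (r : Fin n → ℝ) (hr : ∀ i, r i ∈ Set.Icc 0 R)
    (lamMin : ℝ) (hmin : 0 < lamMin)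
    (hray : ∀ v : Fin d → ℝ,
      lamMin * (v ⬝ᵥ v) ≤
        v ⬝ᵥ ((lam • (1 : Matrix (Fin d) (Fin d) ℝ) +
          ∑ i, vecMulVec (φ i) (φ i)) *ᵥ v)) :
    (∀ ψ : Fin d → ℝ,
      (∑ i, r i • φ i) ⬝ᵥ
          ((lam • (1 : Matrix (Fin d) (Fin d) ℝ) + ∑ i, vecMulVec (φ i) (φ i))⁻¹ *ᵥ ψ) ≤
        Real.sqrt ((n : ℝ) * d) * R *
          Real.sqrt (ψ ⬝ᵥ ((lam • (1 : Matrix (Fin d) (Fin d) ℝ) +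
            ∑ i, vecMulVec (φ i) (φ i))⁻¹ *ᵥ ψ))) ∧
    (∀ ψ : Fin d → ℝ, ψ ⬝ᵥ ψ ≤ 1 →
      (∑ i, r i • φ i) ⬝ᵥ
          ((lam • (1 : Matrix (Fin d) (Fin d) ℝ) + ∑ i, vecMulVec (φ i) (φ i))⁻¹ *ᵥ ψ) ≤
        Real.sqrt ((n : ℝ) * d / lamMin) * R) := by
  rcases Nat.eq_zero_or_pos n with hn | hn
  · subst hn
    constructor <;> intro ψ <;> [skip; intro _] <;>
      simp [Finset.sum_of_isEmpty, Real.sqrt_nonneg, zero_dotProduct]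
  have hR : 0 ≤ R := le_trans (hr ⟨0, hn⟩).1 (hr ⟨0, hn⟩).2
  set A : Matrix (Fin d) (Fin d) ℝ :=
    lam • (1 : Matrix (Fin d) (Fin d) ℝ) + ∑ i, vecMulVec (φ i) (φ i) with hA_def
  -- A is positive definite
  have hvt : ∀ u : Fin d → ℝ, (vecMulVec u u)ᵀ = vecMulVec u u := by
    intro u; ext i j; simp [transpose_apply, vecMulVec_apply, mul_comm]
  have hAherm : A.IsHermitian := by
    have hAt : Aᵀ = A := by
      rw [hA_def, transpose_add, transpose_smul, transpose_one, transpose_sum]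
      simp_rw [hvt]
    exact isHermitian_iff_isSymm.mpr hAt
  have hA : A.PosDef := by
    refine PosDef.of_dotProduct_mulVec_pos hAherm (fun v hv => ?_)
    have h1 : 0 < v ⬝ᵥ v := by
      have := dotProduct_star_self_pos_iff (v := v).mpr hv
      simpa using this
    have := hray v
    simp only [star_trivial]
    calc (0:ℝ) < lamMin * (v ⬝ᵥ v) := mul_pos hmin h1
      _ ≤ v ⬝ᵥ (A *ᵥ v) := hray v
  have hAdet : IsUnit A.det := isUnit_iff_ne_zero.mpr hA.det_pos.ne'
  have hBA : A⁻¹ * A = 1 := nonsing_inv_mul A hAdet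
  have hAB : A * A⁻¹ = 1 := mul_nonsing_inv A hAdet
  have hB : A⁻¹.PosSemidef := hA.inv.posSemidef
  have hBnn : ∀ u : Fin d → ℝ, 0 ≤ u ⬝ᵥ (A⁻¹ *ᵥ u) := fun u => by simpa using hB.dotProduct_mulVec_nonneg u
  -- trace bound : ∑ i, φ i ⬝ᵥ A⁻¹ *ᵥ φ i ≤ d
  have htrinv : 0 ≤ trace A⁻¹ := by
    rw [Matrix.trace]
    apply Finset.sum_nonneg
    intro j _
    have := hBnn (Pi.single j 1)
    simpa [dotProduct, mulVec, Pi.single_apply, Finset.sum_ite_eq, diag] using this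
  have hkey : ∑ i, φ i ⬝ᵥ (A⁻¹ *ᵥ φ i) ≤ (d : ℝ) := by
    have : ∑ i, φ i ⬝ᵥ (A⁻¹ *ᵥ φ i) = (d : ℝ) - lam * trace A⁻¹ := by
      calc ∑ i, φ i ⬝ᵥ (A⁻¹ *ᵥ φ i) = ∑ i, trace (A⁻¹ * vecMulVec (φ i) (φ i)) := by
            simp_rw [trace_aux]
        _ = trace (A⁻¹ * ∑ i, vecMulVec (φ i) (φ i)) := by
            rw [Finset.mul_sum, trace_sum]
        _ = trace (A⁻¹ * (A - lam • 1)) := by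
            congr 2
            rw [hA_def, add_sub_cancel_left]
        _ = (d : ℝ) - lam * trace A⁻¹ := by
            rw [mul_sub, trace_sub, hBA, trace_one, mul_smul_comm, trace_smul, mul_one,
              smul_eq_mul]
            simp
    rw [this]
    nlinarith
  -- part 1
  have part1 : ∀ ψ : Fin d → ℝ,
      (∑ i, r i • φ i) ⬝ᵥ (A⁻¹ *ᵥ ψ) ≤
        Real.sqrt ((n : ℝ) * d) * R * Real.sqrt (ψ ⬝ᵥ (A⁻¹ *ᵥ ψ)) := by
    intro ψ
    have step1 : (∑ i, r i • φ i) ⬝ᵥ (A⁻¹ *ᵥ ψ) = ∑ i, r i * (φ i ⬝ᵥ (A⁻¹ *ᵥ ψ)) := by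
      simp only [dotProduct, Finset.sum_apply, Pi.smul_apply, smul_eq_mul,
        Finset.sum_mul, Finset.mul_sum]
      rw [Finset.sum_comm]
      congr 1; ext i; congr 1; ext j; ring
    rw [step1]
    have step2 : ∑ i, r i * (φ i ⬝ᵥ (A⁻¹ *ᵥ ψ)) ≤
        ∑ i, R * (Real.sqrt (φ i ⬝ᵥ (A⁻¹ *ᵥ φ i)) * Real.sqrt (ψ ⬝ᵥ (A⁻¹ *ᵥ ψ))) := by
      apply Finset.sum_le_sum
      intro i _
      have h1 : φ i ⬝ᵥ (A⁻¹ *ᵥ ψ) ≤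
          Real.sqrt (φ i ⬝ᵥ (A⁻¹ *ᵥ φ i)) * Real.sqrt (ψ ⬝ᵥ (A⁻¹ *ᵥ ψ)) := cs_sqrt_aux hB _ _
      have h2 : 0 ≤ Real.sqrt (φ i ⬝ᵥ (A⁻¹ *ᵥ φ i)) * Real.sqrt (ψ ⬝ᵥ (A⁻¹ *ᵥ ψ)) :=
        mul_nonneg (Real.sqrt_nonneg _) (Real.sqrt_nonneg _)
      calc r i * (φ i ⬝ᵥ (A⁻¹ *ᵥ ψ)) ≤ r i * (Real.sqrt (φ i ⬝ᵥ (A⁻¹ *ᵥ φ i)) * Real.sqrt (ψ ⬝ᵥ (A⁻¹ *ᵥ ψ))) :=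
            mul_le_mul_of_nonneg_left h1 (hr i).1
        _ ≤ R * (Real.sqrt (φ i ⬝ᵥ (A⁻¹ *ᵥ φ i)) * Real.sqrt (ψ ⬝ᵥ (A⁻¹ *ᵥ ψ))) :=
            mul_le_mul_of_nonneg_right (hr i).2 h2
    have step3 : ∑ i, Real.sqrt (φ i ⬝ᵥ (A⁻¹ *ᵥ φ i)) ≤ Real.sqrt ((n : ℝ) * d) := by
      have hcs : (∑ i, Real.sqrt (φ i ⬝ᵥ (A⁻¹ *ᵥ φ i))) ^ 2 ≤
          (n : ℝ) * ∑ i, φ i ⬝ᵥ (A⁻¹ *ᵥ φ i) := by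
        have := Finset.sum_mul_sq_le_sq_mul_sq Finset.univ (fun _ : Fin n => (1:ℝ))
          (fun i => Real.sqrt (φ i ⬝ᵥ (A⁻¹ *ᵥ φ i)))
        simpa [Real.sq_sqrt, hBnn, Finset.card_univ] using this
      have hnn : 0 ≤ ∑ i, Real.sqrt (φ i ⬝ᵥ (A⁻¹ *ᵥ φ i)) :=
        Finset.sum_nonneg fun i _ => Real.sqrt_nonneg _
      rw [← Real.sqrt_sq hnn]
      apply Real.sqrt_le_sqrt
      calc (∑ i, Real.sqrt (φ i ⬝ᵥ (A⁻¹ *ᵥ φ i))) ^ 2 ≤ (n : ℝ) * ∑ i, φ i ⬝ᵥ (A⁻¹ *ᵥ φ i) := hcs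
        _ ≤ (n : ℝ) * d := by
            apply mul_le_mul_of_nonneg_left hkey (Nat.cast_nonneg n)
    calc ∑ i, r i * (φ i ⬝ᵥ (A⁻¹ *ᵥ ψ)) ≤
          ∑ i, R * (Real.sqrt (φ i ⬝ᵥ (A⁻¹ *ᵥ φ i)) * Real.sqrt (ψ ⬝ᵥ (A⁻¹ *ᵥ ψ))) := step2
      _ = R * Real.sqrt (ψ ⬝ᵥ (A⁻¹ *ᵥ ψ)) * ∑ i, Real.sqrt (φ i ⬝ᵥ (A⁻¹ *ᵥ φ i)) := by
          rw [Finset.mul_sum]; congr 1; ext i; ring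
      _ ≤ R * Real.sqrt (ψ ⬝ᵥ (A⁻¹ *ᵥ ψ)) * Real.sqrt ((n : ℝ) * d) := by
          apply mul_le_mul_of_nonneg_left step3
          exact mul_nonneg hR (Real.sqrt_nonneg _)
      _ = Real.sqrt ((n : ℝ) * d) * R * Real.sqrt (ψ ⬝ᵥ (A⁻¹ *ᵥ ψ)) := by ring
  refine ⟨part1, ?_⟩
  intro ψ hψ
  -- ψ ⬝ᵥ A⁻¹ψ ≤ 1/lamMin
  have hB2 : ψ ⬝ᵥ (A⁻¹ *ᵥ ψ) ≤ 1 / lamMin := by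
    set w := A⁻¹ *ᵥ ψ with hw
    set t := ψ ⬝ᵥ w with ht
    have htnn : 0 ≤ t := hBnn ψ
    have h1 : lamMin * (w ⬝ᵥ w) ≤ t := by
      have := hray w
      have hAw : A *ᵥ w = ψ := by
        rw [hw, mulVec_mulVec, hAB, one_mulVec]
      rw [hAw] at this
      calc lamMin * (w ⬝ᵥ w) ≤ w ⬝ᵥ ψ := this
        _ = t := by rw [ht, dotProduct_comm]
    have h2 : t ^ 2 ≤ (ψ ⬝ᵥ ψ) * (w ⬝ᵥ w) := by
      have := Finset.sum_mul_sq_le_sq_mul_sq Finset.univ ψ w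
      simpa [ht, dotProduct, pow_two] using this
    have hww : 0 ≤ w ⬝ᵥ w := by
      simp only [dotProduct]
      exact Finset.sum_nonneg fun i _ => mul_self_nonneg _
    have hpp : 0 ≤ ψ ⬝ᵥ ψ := by
      simp only [dotProduct]
      exact Finset.sum_nonneg fun i _ => mul_self_nonneg _
    have h3 : t ^ 2 ≤ w ⬝ᵥ w := h2.trans (mul_le_of_le_one_left hww hψ)
    have h4 : lamMin * t ^ 2 ≤ t :=
      le_trans (mul_le_mul_of_nonneg_left h3 hmin.le) h1
    rw [le_div_iff₀ hmin]
    nlinarith [h4, htnn, hmin, mul_nonneg hmin.le htnn]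
  have := part1 ψ
  calc (∑ i, r i • φ i) ⬝ᵥ (A⁻¹ *ᵥ ψ) ≤
        Real.sqrt ((n : ℝ) * d) * R * Real.sqrt (ψ ⬝ᵥ (A⁻¹ *ᵥ ψ)) := this
    _ ≤ Real.sqrt ((n : ℝ) * d) * R * Real.sqrt (1 / lamMin) := by
        apply mul_le_mul_of_nonneg_left (Real.sqrt_le_sqrt hB2)
        exact mul_nonneg (Real.sqrt_nonneg _) hR
    _ = Real.sqrt ((n : ℝ) * d / lamMin) * R := by
        have h5 : Real.sqrt ((n : ℝ) * d / lamMin) =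
            Real.sqrt ((n : ℝ) * d) * Real.sqrt (1 / lamMin) := by
          rw [← Real.sqrt_mul (by positivity)]
          congr 1; ring
        rw [h5]; ring
end

section
/- Let Σ_D be symmetric positive definite with minimum eigenvalue λ_min ≥ 2, and let φ₀ satisfy ‖φ₀‖₂ ≤ 1 with Σ₋ = Σ_D − φ₀φ₀ᵀ positive definite. Then for any vector φ, ‖φ‖_{Σ₋⁻¹} − ‖φ‖_{Σ_D⁻¹} ≤ (1/(2(λ_min − 1)))·‖φ‖_{Σ_D⁻¹}. -/
open Matrix

/-- The norm `‖u‖_M = √(uᵀ M u)` induced by a positive definite matrix `M`. -/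
noncomputable def mnorm {d : ℕ} (M : Matrix (Fin d) (Fin d) ℝ) (u : Fin d → ℝ) : ℝ :=
  Real.sqrt (u ⬝ᵥ (M *ᵥ u))

section Aux

variable {d : ℕ}

lemma aux_symm_dot {M : Matrix (Fin d) (Fin d) ℝ} (hM : M.IsHermitian) (x y : Fin d → ℝ) :
    x ⬝ᵥ M *ᵥ y = y ⬝ᵥ M *ᵥ x := by
  have hMt : Mᵀ = M := by
    have := hM.eq
    rwa [conjTranspose_eq_transpose_of_trivial] at this
  rw [dotProduct_mulVec]
  conv_lhs => rw [← hMt]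
  rw [vecMul_transpose, dotProduct_comm]

lemma aux_cs {M : Matrix (Fin d) (Fin d) ℝ} (hM : M.PosSemidef) (x y : Fin d → ℝ) :
    (x ⬝ᵥ M *ᵥ y) ^ 2 ≤ (x ⬝ᵥ M *ᵥ x) * (y ⬝ᵥ M *ᵥ y) := by
  have key : ∀ t : ℝ,
      0 ≤ (y ⬝ᵥ M *ᵥ y) * (t * t) + (2 * (x ⬝ᵥ M *ᵥ y)) * t + (x ⬝ᵥ M *ᵥ x) := by
    intro t
    have h0 := hM.dotProduct_mulVec_nonneg (x + t • y)
    have e : (x + t • y) ⬝ᵥ M *ᵥ (x + t • y)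
        = (y ⬝ᵥ M *ᵥ y) * (t * t) + (2 * (x ⬝ᵥ M *ᵥ y)) * t + (x ⬝ᵥ M *ᵥ x) := by
      simp only [mulVec_add, mulVec_smul, dotProduct_add, add_dotProduct, dotProduct_smul,
        smul_dotProduct, smul_eq_mul]
      rw [aux_symm_dot hM.1 y x]
      ring
    simp only [star_trivial] at h0
    rw [e] at h0
    exact h0
  have hd := discrim_le_zero key
  rw [discrim] at hd
  nlinarith [hd]

lemma aux_cs_inv {M : Matrix (Fin d) (Fin d) ℝ} (hM : M.PosDef) (x y : Fin d → ℝ) :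
    (x ⬝ᵥ y) ^ 2 ≤ (x ⬝ᵥ M⁻¹ *ᵥ x) * (y ⬝ᵥ M *ᵥ y) := by
  have hdet : IsUnit M.det := (isUnit_iff_isUnit_det M).1 hM.isUnit
  have hMMinv : M * M⁻¹ = 1 := mul_nonsing_inv M hdet
  set x' := M⁻¹ *ᵥ x with hx'
  have h1 : M *ᵥ x' = x := by
    rw [hx', mulVec_mulVec, hMMinv, one_mulVec]
  have h2 : x' ⬝ᵥ M *ᵥ y = x ⬝ᵥ y := by
    rw [aux_symm_dot hM.1 x' y, h1, dotProduct_comm]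
  have h3 : x' ⬝ᵥ M *ᵥ x' = x ⬝ᵥ M⁻¹ *ᵥ x := by
    rw [h1, dotProduct_comm]
  calc (x ⬝ᵥ y) ^ 2 = (x' ⬝ᵥ M *ᵥ y) ^ 2 := by rw [h2]
    _ ≤ (x' ⬝ᵥ M *ᵥ x') * (y ⬝ᵥ M *ᵥ y) := aux_cs hM.posSemidef x' y
    _ = (x ⬝ᵥ M⁻¹ *ᵥ x) * (y ⬝ᵥ M *ᵥ y) := by rw [h3]

lemma aux_vecMulVec_quad (φ₀ u : Fin d → ℝ) :
    u ⬝ᵥ (vecMulVec φ₀ φ₀ *ᵥ u) = (φ₀ ⬝ᵥ u) ^ 2 := by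
  simp only [vecMulVec, mulVec, dotProduct, of_apply, sq]
  rw [Finset.sum_mul_sum]
  apply Finset.sum_congr rfl
  intro i _
  rw [Finset.mul_sum]
  apply Finset.sum_congr rfl
  intro j _
  ring

end Aux

set_option maxHeartbeats 1000000 in
/-- Sensitivity bound for the elliptical potential under a rank-one downdate. -/
theorem stmt14 {d : ℕ} (SigD : Matrix (Fin d) (Fin d) ℝ) (φ₀ : Fin d → ℝ)
    (hSig : SigD.PosDef) (hφ₀ : φ₀ ⬝ᵥ φ₀ ≤ 1)
    (hSigM : (SigD - vecMulVec φ₀ φ₀).PosDef)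
    (lamMin : ℝ) (hlam : 2 ≤ lamMin)
    (hray : ∀ v : Fin d → ℝ, lamMin * (v ⬝ᵥ v) ≤ v ⬝ᵥ (SigD *ᵥ v)) :
    ∀ φ : Fin d → ℝ,
      mnorm (SigD - vecMulVec φ₀ φ₀)⁻¹ φ - mnorm SigD⁻¹ φ ≤
        (1 / (2 * (lamMin - 1))) * mnorm SigD⁻¹ φ := by
  intro φ
  set A := SigD with hA
  set B := SigD - vecMulVec φ₀ φ₀ with hB
  have hAdet : IsUnit A.det := (isUnit_iff_isUnit_det A).1 hSig.isUnit
  have hBdet : IsUnit B.det := (isUnit_iff_isUnit_det B).1 hSigM.isUnit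
  -- s := φ₀ᵀ A⁻¹ φ₀
  set s := φ₀ ⬝ᵥ A⁻¹ *ᵥ φ₀ with hs
  set w := A⁻¹ *ᵥ φ₀ with hw
  have hAw : A *ᵥ w = φ₀ := by
    rw [hw, mulVec_mulVec, mul_nonsing_inv A hAdet, one_mulVec]
  have hsw : s = φ₀ ⬝ᵥ w := rfl
  have hwAw : w ⬝ᵥ A *ᵥ w = s := by rw [hAw, dotProduct_comm, hsw]
  have hs0 : 0 ≤ s := by
    have := hSig.inv.posSemidef.dotProduct_mulVec_nonneg φ₀
    simpa using this
  have hww0 : 0 ≤ w ⬝ᵥ w := by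
    have : (0:ℝ) ≤ ∑ i, w i * w i := Finset.sum_nonneg fun i _ => mul_self_nonneg _
    simpa [dotProduct] using this
  have hφ₀0 : 0 ≤ φ₀ ⬝ᵥ φ₀ := by
    have : (0:ℝ) ≤ ∑ i, φ₀ i * φ₀ i := Finset.sum_nonneg fun i _ => mul_self_nonneg _
    simpa [dotProduct] using this
  have hray_w : lamMin * (w ⬝ᵥ w) ≤ s := by rw [← hwAw]; exact hray w
  -- Cauchy-Schwarz in ℝᵈ : (φ₀ ⬝ᵥ w)^2 ≤ (φ₀⬝ᵥφ₀)(w⬝ᵥw)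
  have hcs_std : (φ₀ ⬝ᵥ w) ^ 2 ≤ (φ₀ ⬝ᵥ φ₀) * (w ⬝ᵥ w) := by
    have := Finset.sum_mul_sq_le_sq_mul_sq Finset.univ φ₀ w
    simpa [dotProduct, sq, Finset.mul_sum, mul_comm] using this
  have hlam0 : (0:ℝ) < lamMin := by linarith
  -- λ s ≤ 1
  have hls : lamMin * s ≤ 1 := by
    have h1 : lamMin * s ^ 2 ≤ s := by
      calc lamMin * s ^ 2 = lamMin * (φ₀ ⬝ᵥ w) ^ 2 := by rw [hsw]
        _ ≤ lamMin * ((φ₀ ⬝ᵥ φ₀) * (w ⬝ᵥ w)) := by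
            apply mul_le_mul_of_nonneg_left hcs_std (le_of_lt hlam0)
        _ = (φ₀ ⬝ᵥ φ₀) * (lamMin * (w ⬝ᵥ w)) := by ring
        _ ≤ (φ₀ ⬝ᵥ φ₀) * s := mul_le_mul_of_nonneg_left hray_w hφ₀0
        _ ≤ 1 * s := mul_le_mul_of_nonneg_right hφ₀ hs0
        _ = s := one_mul s
    rcases eq_or_lt_of_le hs0 with h | h
    · rw [← h]; linarith
    · nlinarith [h1, h]
  have h1s : (1:ℝ)/2 ≤ 1 - s := by nlinarith [hls, hs0, hlam]
  -- P, Q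
  set P := φ ⬝ᵥ A⁻¹ *ᵥ φ with hP
  set Q := φ ⬝ᵥ B⁻¹ *ᵥ φ with hQ
  have hP0 : 0 ≤ P := by have := hSig.inv.posSemidef.dotProduct_mulVec_nonneg φ; simpa using this
  have hQ0 : 0 ≤ Q := by have := hSigM.inv.posSemidef.dotProduct_mulVec_nonneg φ; simpa using this
  set u := B⁻¹ *ᵥ φ with hu
  have hBu : B *ᵥ u = φ := by
    rw [hu, mulVec_mulVec, mul_nonsing_inv B hBdet, one_mulVec]
  have hQu : Q = φ ⬝ᵥ u := rfl
  have huBu : u ⬝ᵥ B *ᵥ u = Q := by rw [hBu, dotProduct_comm, hQu]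
  have hdecomp : u ⬝ᵥ A *ᵥ u = Q + (φ₀ ⬝ᵥ u) ^ 2 := by
    have : u ⬝ᵥ B *ᵥ u = u ⬝ᵥ A *ᵥ u - (φ₀ ⬝ᵥ u) ^ 2 := by
      rw [hB, sub_mulVec, dotProduct_sub, aux_vecMulVec_quad]
    rw [huBu] at this
    linarith
  have huAu0 : 0 ≤ u ⬝ᵥ A *ᵥ u := by have := hSig.posSemidef.dotProduct_mulVec_nonneg u; simpa using this
  -- (φ₀ ⬝ᵥ u)² ≤ s * uᵀAu
  have hkey1 : (φ₀ ⬝ᵥ u) ^ 2 ≤ s * (u ⬝ᵥ A *ᵥ u) := aux_cs_inv hSig φ₀ u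
  -- (1-s) uᵀAu ≤ Q
  have hkey2 : (1 - s) * (u ⬝ᵥ A *ᵥ u) ≤ Q := by nlinarith [hkey1, hdecomp]
  -- Q² ≤ P * uᵀAu
  have hkey3 : Q ^ 2 ≤ P * (u ⬝ᵥ A *ᵥ u) := by
    have := aux_cs_inv hSig φ u
    rw [← hQu] at this
    exact this
  -- (1-s) Q ≤ P
  have hmain : (1 - s) * Q ≤ P := by
    rcases eq_or_lt_of_le hQ0 with h | h
    · rw [← h]; simpa using hP0
    · have h4 : (1 - s) * Q ^ 2 ≤ P * Q := by
        calc (1 - s) * Q ^ 2 ≤ (1 - s) * (P * (u ⬝ᵥ A *ᵥ u)) :=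
              mul_le_mul_of_nonneg_left hkey3 (by linarith)
          _ = P * ((1 - s) * (u ⬝ᵥ A *ᵥ u)) := by ring
          _ ≤ P * Q := mul_le_mul_of_nonneg_left hkey2 hP0
      nlinarith [h4, h]
  -- (λ-1) Q ≤ λ P
  have hlq : (lamMin - 1) * Q ≤ lamMin * P := by
    have h5 : lamMin * ((1 - s) * Q) ≤ lamMin * P :=
      mul_le_mul_of_nonneg_left hmain (le_of_lt hlam0)
    nlinarith [hls, hQ0, h5]
  -- Q ≤ (1+c)² P
  set c := 1 / (2 * (lamMin - 1)) with hc
  have hl1 : (0:ℝ) < lamMin - 1 := by linarith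
  have hc0 : 0 ≤ c := by positivity
  have hQle : Q ≤ (1 + c) ^ 2 * P := by
    have he : (1 + c) ^ 2 = (2 * lamMin - 1) ^ 2 / (4 * (lamMin - 1) ^ 2) := by
      rw [hc]; field_simp; ring
    rw [he, div_mul_eq_mul_div, le_div_iff₀ (by positivity)]
    nlinarith [mul_le_mul_of_nonneg_left hlq (by linarith : (0:ℝ) ≤ 4 * (lamMin - 1)),
      hP0, sq_nonneg (lamMin - 2)]
  -- conclude with square roots
  have hmB : mnorm B⁻¹ φ = Real.sqrt Q := rfl
  have hmA : mnorm A⁻¹ φ = Real.sqrt P := rfl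
  rw [hmB, hmA]
  have hsq : Real.sqrt Q ≤ (1 + c) * Real.sqrt P := by
    have := Real.sqrt_le_sqrt hQle
    rwa [Real.sqrt_mul (by positivity), Real.sqrt_sq (by positivity)] at this
  linarith [hsq, Real.sqrt_nonneg P]
end

section
/- Let Σ_D be symmetric positive definite and Σ₊ = Σ_D + φ₀φ₀ᵀ with ‖φ₀‖₂ ≤ 1. Then for any vector φ, 0 ≤ ‖φ‖_{Σ_D⁻¹} − ‖φ‖_{Σ₊⁻¹} ≤ (1/2)·‖φ₀‖_{Σ_D⁻¹}·‖φ‖_{Σ_D⁻¹}·‖φ₀‖_{Σ_D⁻¹} ≤ (1/(2λ_min(Σ_D)))·‖φ‖_{Σ_D⁻¹}. -/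
open Matrix

private lemma mul_vecMulVec' {d : ℕ} (A : Matrix (Fin d) (Fin d) ℝ) (u v : Fin d → ℝ) :
    A * vecMulVec u v = vecMulVec (A *ᵥ u) v := by
  ext i j
  simp [mul_apply, vecMulVec_apply, mulVec, dotProduct, Finset.sum_mul, mul_assoc]

private lemma vecMulVec_mul' {d : ℕ} (A : Matrix (Fin d) (Fin d) ℝ) (u v : Fin d → ℝ) :
    vecMulVec u v * A = vecMulVec u (Aᵀ *ᵥ v) := by
  ext i j
  simp [mul_apply, vecMulVec_apply, mulVec, dotProduct, Finset.mul_sum, transpose_apply]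
  congr 1; ext k; ring

private lemma vecMulVec_mulVec' {d : ℕ} (u v w : Fin d → ℝ) :
    vecMulVec u v *ᵥ w = (v ⬝ᵥ w) • u := by
  ext i
  simp only [vecMulVec_apply, mulVec, dotProduct, Pi.smul_apply, smul_eq_mul, Finset.sum_mul]
  exact Finset.sum_congr rfl fun k _ => by ring

private lemma scalar_bound (lam c A s : ℝ) (hlam : 0 < lam) (hc0 : 0 ≤ c) (hA0 : 0 ≤ A)
    (hcs : s ^ 2 ≤ c * A) (hlc : lam * c ≤ 1) :
    0 ≤ Real.sqrt A - Real.sqrt (A - (1 + c)⁻¹ * s ^ 2) ∧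
    Real.sqrt A - Real.sqrt (A - (1 + c)⁻¹ * s ^ 2) ≤
      (1 / 2) * Real.sqrt c * Real.sqrt A * Real.sqrt c ∧
    (1 / 2) * Real.sqrt c * Real.sqrt A * Real.sqrt c ≤ (1 / (2 * lam)) * Real.sqrt A := by
  have h1c : (0:ℝ) < 1 + c := by linarith
  have htc : (1 + c)⁻¹ * (1 + c) = 1 := inv_mul_cancel₀ h1c.ne'
  have ht0 : 0 ≤ (1 + c)⁻¹ := inv_nonneg.mpr h1c.le
  set B : ℝ := A - (1 + c)⁻¹ * s ^ 2 with hB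
  have hBA : B ≤ A := sub_le_self A (mul_nonneg ht0 (sq_nonneg s))
  have hB_lb : (1 + c)⁻¹ * A ≤ B := by
    have h1 : (1 + c)⁻¹ * s ^ 2 ≤ (1 + c)⁻¹ * (c * A) := mul_le_mul_of_nonneg_left hcs ht0
    have h2 : (1 + c)⁻¹ * (c * A) = A - (1 + c)⁻¹ * A := by
      field_simp
      ring
    linarith
  have hsA0 : 0 ≤ Real.sqrt A := Real.sqrt_nonneg A
  have hcc : Real.sqrt c * Real.sqrt c = c := Real.mul_self_sqrt hc0
  have hrhs : (1 / 2) * Real.sqrt c * Real.sqrt A * Real.sqrt c = (c / 2) * Real.sqrt A := by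
    linear_combination (Real.sqrt A / 2) * hcc
  refine ⟨?_, ?_, ?_⟩
  · have := Real.sqrt_le_sqrt hBA
    linarith
  · rw [hrhs]
    set u : ℝ := Real.sqrt (1 + c) with hu
    have hu1 : 1 ≤ u := by
      have h := Real.sqrt_le_sqrt (show (1:ℝ) ≤ 1 + c by linarith)
      simpa [hu] using h
    have hu0 : 0 < u := by linarith
    have huu : u * u = 1 + c := Real.mul_self_sqrt h1c.le
    have hsqB : u⁻¹ * Real.sqrt A ≤ Real.sqrt B := by
      have h1 : Real.sqrt ((1 + c)⁻¹ * A) ≤ Real.sqrt B := Real.sqrt_le_sqrt hB_lb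
      have h2 : Real.sqrt ((1 + c)⁻¹ * A) = u⁻¹ * Real.sqrt A := by
        rw [Real.sqrt_mul ht0, Real.sqrt_inv, hu]
      linarith [h2 ▸ h1]
    have hscal : 1 - u⁻¹ ≤ c / 2 := by
      have h3 : 0 ≤ u ^ 3 - 3 * u + 2 := by nlinarith [sq_nonneg (u - 1)]
      have hcu : c * u = u * u * u - u := by linear_combination (-u) * huu
      have hkey : u - 1 ≤ (c / 2) * u := by nlinarith [h3, hcu]
      have heq : 1 - u⁻¹ = (u - 1) / u := by field_simp
      rw [heq, div_le_iff₀ hu0]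
      linarith
    have h5 : Real.sqrt A - Real.sqrt B ≤ Real.sqrt A - u⁻¹ * Real.sqrt A := by linarith
    have h6 : Real.sqrt A - u⁻¹ * Real.sqrt A = (1 - u⁻¹) * Real.sqrt A := by ring
    have h4 : (1 - u⁻¹) * Real.sqrt A ≤ (c / 2) * Real.sqrt A :=
      mul_le_mul_of_nonneg_right hscal hsA0
    linarith
  · rw [hrhs]
    have hdiv : c / 2 ≤ 1 / (2 * lam) := by
      rw [div_le_div_iff₀ (by norm_num) (by positivity)]
      nlinarith [hlc]
    exact mul_le_mul_of_nonneg_right hdiv hsA0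

/-- Sensitivity bound for the elliptical potential under a rank-one update. -/
theorem stmt15 {d : ℕ} (SigD : Matrix (Fin d) (Fin d) ℝ) (φ₀ : Fin d → ℝ)
    (hSig : SigD.PosDef) (hφ₀ : φ₀ ⬝ᵥ φ₀ ≤ 1)
    (lamMin : ℝ) (hlamMin : 0 < lamMin)
    (hray : ∀ v : Fin d → ℝ, lamMin * (v ⬝ᵥ v) ≤ v ⬝ᵥ (SigD *ᵥ v)) :
    ∀ φ : Fin d → ℝ,
      0 ≤ mnorm SigD⁻¹ φ - mnorm (SigD + vecMulVec φ₀ φ₀)⁻¹ φ ∧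
      mnorm SigD⁻¹ φ - mnorm (SigD + vecMulVec φ₀ φ₀)⁻¹ φ ≤
        (1 / 2) * mnorm SigD⁻¹ φ₀ * mnorm SigD⁻¹ φ * mnorm SigD⁻¹ φ₀ ∧
      (1 / 2) * mnorm SigD⁻¹ φ₀ * mnorm SigD⁻¹ φ * mnorm SigD⁻¹ φ₀ ≤
        (1 / (2 * lamMin)) * mnorm SigD⁻¹ φ := by
  have hmul : SigD * SigD⁻¹ = 1 := Matrix.mul_nonsing_inv _ hSig.det_pos.ne'.isUnit
  have hT : (SigD⁻¹)ᵀ = SigD⁻¹ := by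
    have := hSig.inv.isHermitian
    simpa [Matrix.IsHermitian, conjTranspose_eq_transpose_of_trivial] using this
  have hpsd : ∀ x : Fin d → ℝ, 0 ≤ x ⬝ᵥ (SigD⁻¹ *ᵥ x) := fun x => by
    simpa using hSig.inv.posSemidef.re_dotProduct_nonneg x
  set w : Fin d → ℝ := SigD⁻¹ *ᵥ φ₀ with hw
  set c : ℝ := φ₀ ⬝ᵥ w with hc
  have hSw : SigD *ᵥ w = φ₀ := by
    rw [hw, Matrix.mulVec_mulVec, hmul, Matrix.one_mulVec]
  have hc0 : 0 ≤ c := hpsd φ₀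
  have h1c : (0:ℝ) < 1 + c := by linarith
  have htc : (1+c)⁻¹ * (1+c) = 1 := inv_mul_cancel₀ h1c.ne'
  have ht0 : 0 ≤ (1+c)⁻¹ := inv_nonneg.mpr h1c.le
  -- Sherman–Morrison
  have hSM : (SigD + vecMulVec φ₀ φ₀)⁻¹ = SigD⁻¹ - (1+c)⁻¹ • vecMulVec w w := by
    apply Matrix.inv_eq_right_inv
    have e1 : SigD * vecMulVec w w = vecMulVec φ₀ w := by
      rw [mul_vecMulVec', hSw]
    have e2 : vecMulVec φ₀ φ₀ * SigD⁻¹ = vecMulVec φ₀ w := by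
      rw [vecMulVec_mul', hT]
    have e3 : vecMulVec φ₀ φ₀ * vecMulVec w w = c • vecMulVec φ₀ w := by
      ext i j
      simp only [mul_apply, vecMulVec_apply, Matrix.smul_apply, smul_eq_mul, hc, dotProduct,
        Finset.sum_mul]
      exact Finset.sum_congr rfl fun k _ => by ring
    have hco : (1+c)⁻¹ * c = 1 - (1+c)⁻¹ := by field_simp; ring
    rw [Matrix.add_mul, Matrix.mul_sub, Matrix.mul_sub, Matrix.mul_smul, Matrix.mul_smul,
      hmul, e1, e2, e3, smul_smul, hco, sub_smul, one_smul]
    abel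
  -- bound on c
  have hwn : lamMin * (w ⬝ᵥ w) ≤ c := by
    have h := hray w
    rw [hSw] at h
    exact le_of_le_of_eq h (dotProduct_comm w φ₀)
  have hww : 0 ≤ w ⬝ᵥ w := by
    simp only [dotProduct]
    exact Finset.sum_nonneg fun i _ => mul_self_nonneg _
  have hcs2 : c^2 ≤ w ⬝ᵥ w := by
    have h := Finset.sum_mul_sq_le_sq_mul_sq Finset.univ φ₀ w
    have h' : c^2 ≤ (φ₀ ⬝ᵥ φ₀) * (w ⬝ᵥ w) := by
      simpa [hc, dotProduct, sq] using h
    nlinarith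
  have hlc : lamMin * c ≤ 1 := by
    rcases hc0.eq_or_lt with h | h
    · rw [← h]; simp
    · have hx : lamMin * c * c ≤ 1 * c := by
        nlinarith [mul_le_mul_of_nonneg_left hcs2 hlamMin.le]
      exact le_of_mul_le_mul_right hx h
  intro φ
  set A : ℝ := φ ⬝ᵥ (SigD⁻¹ *ᵥ φ) with hA
  set s : ℝ := w ⬝ᵥ φ with hs
  have hA0 : 0 ≤ A := hpsd φ
  -- Cauchy–Schwarz for the bilinear form
  have hcsA : s^2 ≤ c * A := by
    have key : ∀ t : ℝ, 0 ≤ c * (t*t) + (2*s) * t + A := by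
      intro t
      have h0 := hpsd (φ + t • φ₀)
      have hsym : φ₀ ⬝ᵥ (SigD⁻¹ *ᵥ φ) = s := by
        rw [dotProduct_mulVec, ← hT, vecMul_transpose, hs, hw]
      have hsym2 : φ ⬝ᵥ (SigD⁻¹ *ᵥ φ₀) = s := by
        rw [← hw, hs, dotProduct_comm]
      rw [Matrix.mulVec_add, Matrix.mulVec_smul, dotProduct_add, add_dotProduct,
        add_dotProduct, dotProduct_smul, smul_dotProduct, smul_dotProduct,
        dotProduct_smul] at h0
      simp only [smul_eq_mul] at h0
      rw [hsym, hsym2] at h0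
      have hcφ : φ₀ ⬝ᵥ (SigD⁻¹ *ᵥ φ₀) = c := rfl
      rw [hcφ] at h0
      nlinarith [h0]
    have hd := discrim_le_zero key
    rw [discrim] at hd
    nlinarith
  -- quadratic form of the updated inverse
  have hq : φ ⬝ᵥ ((SigD + vecMulVec φ₀ φ₀)⁻¹ *ᵥ φ) = A - (1 + c)⁻¹ * s ^ 2 := by
    rw [hSM, Matrix.sub_mulVec, dotProduct_sub, Matrix.smul_mulVec,
      dotProduct_smul, vecMulVec_mulVec', dotProduct_smul]
    simp only [smul_eq_mul]
    rw [← hA, ← hs, dotProduct_comm φ w, ← hs]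
    ring
  have hmφ : mnorm SigD⁻¹ φ = Real.sqrt A := rfl
  have hmφ₀ : mnorm SigD⁻¹ φ₀ = Real.sqrt c := rfl
  have hmB : mnorm (SigD + vecMulVec φ₀ φ₀)⁻¹ φ = Real.sqrt (A - (1 + c)⁻¹ * s ^ 2) := by
    rw [mnorm, hq]
  rw [hmφ, hmφ₀, hmB]
  exact scalar_bound lamMin c A s hlamMin hc0 hA0 hcsA hlc
end

section
/- Let Σ_D be symmetric positive definite, and φ₀ with ‖φ₀‖₂ ≤ 1. Write Σ₋ = Σ_D − φ₀φ₀ᵀ (assumed positive definite) and Σ₊ = Σ_D + φ₀φ₀ᵀ. Then for any φ: ‖φ‖_{Σ_D⁻¹} ≤ ‖φ‖_{Σ₋⁻¹} ≤ ‖φ‖_{Σ_D⁻¹}/√(1 − 1/λ_min(Σ_D)) and ‖φ‖_{Σ_D⁻¹}/√(1 + 1/λ_min(Σ_D)) ≤ ‖φ‖_{Σ₊⁻¹} ≤ ‖φ‖_{Σ_D⁻¹}. -/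
open Matrix

lemma dot_symm {d : ℕ} {M : Matrix (Fin d) (Fin d) ℝ} (h : M.IsHermitian)
    (x y : Fin d → ℝ) : x ⬝ᵥ (M *ᵥ y) = y ⬝ᵥ (M *ᵥ x) := by
  rw [dotProduct_mulVec, ← mulVec_transpose, dotProduct_comm]
  have ht : Mᵀ = M := by
    have := h.eq
    exact (conjTranspose_eq_transpose_of_trivial M).symm.trans this
  rw [ht]

lemma psd_nonneg {d : ℕ} {M : Matrix (Fin d) (Fin d) ℝ} (h : M.PosSemidef)
    (x : Fin d → ℝ) : 0 ≤ x ⬝ᵥ (M *ᵥ x) := by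
  simpa using h.dotProduct_mulVec_nonneg x

lemma cs_psd {d : ℕ} {M : Matrix (Fin d) (Fin d) ℝ} (h : M.PosSemidef)
    (x y : Fin d → ℝ) :
    (x ⬝ᵥ (M *ᵥ y))^2 ≤ (x ⬝ᵥ (M *ᵥ x)) * (y ⬝ᵥ (M *ᵥ y)) := by
  have key : ∀ t : ℝ, 0 ≤ (y ⬝ᵥ (M *ᵥ y)) * (t*t) + (2 * (x ⬝ᵥ (M *ᵥ y))) * t
      + (x ⬝ᵥ (M *ᵥ x)) := by
    intro t
    have h0 := psd_nonneg h (x + t • y)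
    have hsym := dot_symm h.1 y x
    simp only [mulVec_add, mulVec_smul, dotProduct_add, add_dotProduct,
      smul_dotProduct, dotProduct_smul, smul_eq_mul] at h0
    rw [hsym] at h0
    nlinarith [h0]
  have hd := discrim_le_zero key
  simp only [discrim] at hd
  nlinarith [hd]

lemma inv_form_mono {d : ℕ} {A B : Matrix (Fin d) (Fin d) ℝ}
    (hA : A.PosDef) (hB : B.PosDef)
    (hle : ∀ v, v ⬝ᵥ (A *ᵥ v) ≤ v ⬝ᵥ (B *ᵥ v)) (u : Fin d → ℝ) :
    u ⬝ᵥ (B⁻¹ *ᵥ u) ≤ u ⬝ᵥ (A⁻¹ *ᵥ u) := by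
  have hAd : IsUnit A.det := isUnit_iff_ne_zero.2 hA.det_pos.ne'
  have hBd : IsUnit B.det := isUnit_iff_ne_zero.2 hB.det_pos.ne'
  set x := B⁻¹ *ᵥ u with hx
  set y := A⁻¹ *ᵥ u with hy
  have hAy : A *ᵥ y = u := by
    rw [hy, mulVec_mulVec, Matrix.mul_nonsing_inv A hAd, one_mulVec]
  have hBx : B *ᵥ x = u := by
    rw [hx, mulVec_mulVec, Matrix.mul_nonsing_inv B hBd, one_mulVec]
  have hsx : u ⬝ᵥ x = x ⬝ᵥ (B *ᵥ x) := by
    rw [hBx]; exact dotProduct_comm u x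
  have hsxA : u ⬝ᵥ x = x ⬝ᵥ (A *ᵥ y) := by
    rw [hAy]; exact dotProduct_comm u x
  have huy : u ⬝ᵥ y = y ⬝ᵥ (A *ᵥ y) := by
    rw [hAy]; exact dotProduct_comm u y
  have hs0 : 0 ≤ u ⬝ᵥ x := by
    rw [hsx]; exact psd_nonneg hB.posSemidef x
  have hy0 : 0 ≤ u ⬝ᵥ y := by
    rw [huy]; exact psd_nonneg hA.posSemidef y
  rcases eq_or_lt_of_le hs0 with hz | hpos
  · linarith
  have hcs := cs_psd hA.posSemidef x y
  rw [← hsxA] at hcs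
  have hxx := hle x
  have : (u ⬝ᵥ x)^2 ≤ (u ⬝ᵥ x) * (u ⬝ᵥ y) := by
    calc (u ⬝ᵥ x)^2 ≤ (x ⬝ᵥ (A *ᵥ x)) * (y ⬝ᵥ (A *ᵥ y)) := hcs
    _ ≤ (x ⬝ᵥ (B *ᵥ x)) * (y ⬝ᵥ (A *ᵥ y)) := by
        apply mul_le_mul_of_nonneg_right hxx
        exact psd_nonneg hA.posSemidef y
    _ = (u ⬝ᵥ x) * (u ⬝ᵥ y) := by rw [← hsx, ← huy]
  nlinarith [this, hpos]


lemma smul_posDef {d : ℕ} {S : Matrix (Fin d) (Fin d) ℝ} (hS : S.PosDef)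
    {c : ℝ} (hc : 0 < c) : (c • S).PosDef := by
  refine Matrix.PosDef.of_dotProduct_mulVec_pos ?_ (fun x hx => ?_)
  · have h := hS.1.eq
    unfold Matrix.IsHermitian
    rw [conjTranspose_smul, h]
    simp
  · rw [smul_mulVec, dotProduct_smul, smul_eq_mul]
    exact mul_pos hc (by simpa using hS.dotProduct_mulVec_pos hx)

lemma inv_smul_form {d : ℕ} {S : Matrix (Fin d) (Fin d) ℝ} (hS : S.PosDef)
    {c : ℝ} (hc : 0 < c) (u : Fin d → ℝ) :
    u ⬝ᵥ ((c • S)⁻¹ *ᵥ u) = c⁻¹ * (u ⬝ᵥ (S⁻¹ *ᵥ u)) := by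
  have hdet : IsUnit S.det := isUnit_iff_ne_zero.2 hS.det_pos.ne'
  letI : Invertible c := invertibleOfNonzero hc.ne'
  have h2 : (c • S)⁻¹ = ⅟c • S⁻¹ := Matrix.inv_smul S c hdet
  rw [h2, invOf_eq_inv, smul_mulVec, dotProduct_smul, smul_eq_mul]

lemma vecMulVec_form {d : ℕ} (a v : Fin d → ℝ) :
    v ⬝ᵥ (vecMulVec a a *ᵥ v) = (a ⬝ᵥ v)^2 := by
  have h : vecMulVec a a *ᵥ v = (a ⬝ᵥ v) • a := by
    ext i
    simp [mulVec, vecMulVec_apply, dotProduct, Finset.mul_sum, mul_assoc, mul_comm, mul_left_comm]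
  rw [h, dotProduct_smul, smul_eq_mul, dotProduct_comm]
  ring

lemma vecMulVec_psd {d : ℕ} (a : Fin d → ℝ) : (vecMulVec a a).PosSemidef := by
  refine Matrix.PosSemidef.of_dotProduct_mulVec_nonneg ?_ (fun x => ?_)
  · unfold Matrix.IsHermitian
    ext i j
    simp [conjTranspose_apply, vecMulVec_apply, mul_comm]
  · have : star x = x := by simp
    rw [this, vecMulVec_form]
    positivity



/-- Two-sided comparison of the elliptical potentials for a rank-one downdate
`Σ₋ = Σ_D − φ₀φ₀ᵀ` and update `Σ₊ = Σ_D + φ₀φ₀ᵀ`. -/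
theorem stmt16 {d : ℕ} (SigD : Matrix (Fin d) (Fin d) ℝ) (φ₀ : Fin d → ℝ)
    (hSig : SigD.PosDef) (hφ₀ : φ₀ ⬝ᵥ φ₀ ≤ 1)
    (hSigM : (SigD - vecMulVec φ₀ φ₀).PosDef)
    (lamMin : ℝ) (hlamMin : 1 < lamMin)
    (hray : ∀ v : Fin d → ℝ, lamMin * (v ⬝ᵥ v) ≤ v ⬝ᵥ (SigD *ᵥ v)) :
    ∀ φ : Fin d → ℝ,
      mnorm SigD⁻¹ φ ≤ mnorm (SigD - vecMulVec φ₀ φ₀)⁻¹ φ ∧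
      mnorm (SigD - vecMulVec φ₀ φ₀)⁻¹ φ ≤
        mnorm SigD⁻¹ φ / Real.sqrt (1 - 1 / lamMin) ∧
      mnorm SigD⁻¹ φ / Real.sqrt (1 + 1 / lamMin) ≤
        mnorm (SigD + vecMulVec φ₀ φ₀)⁻¹ φ ∧
      mnorm (SigD + vecMulVec φ₀ φ₀)⁻¹ φ ≤ mnorm SigD⁻¹ φ := by
  intro φ
  have hlam0 : (0:ℝ) < lamMin := lt_trans one_pos hlamMin
  set P := vecMulVec φ₀ φ₀ with hPdef
  have hP : P.PosSemidef := vecMulVec_psd φ₀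
  have hSp : (SigD + P).PosDef := hSig.add_posSemidef hP
  -- key scalar bound : (φ₀⬝v)² ≤ (1/λ) vᵀ S v
  have hkey : ∀ v : Fin d → ℝ, lamMin * (φ₀ ⬝ᵥ v)^2 ≤ v ⬝ᵥ (SigD *ᵥ v) := by
    intro v
    have hcs : (φ₀ ⬝ᵥ v)^2 ≤ (φ₀ ⬝ᵥ φ₀) * (v ⬝ᵥ v) := by
      have := cs_psd (Matrix.PosDef.one (n := Fin d) (R := ℝ)).posSemidef φ₀ v
      simpa [one_mulVec] using this
    have hvv : 0 ≤ v ⬝ᵥ v := by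
      have := psd_nonneg (Matrix.PosDef.one (n := Fin d) (R := ℝ)).posSemidef v
      simpa [one_mulVec] using this
    have h1 : (φ₀ ⬝ᵥ v)^2 ≤ v ⬝ᵥ v := le_trans hcs (by nlinarith)
    have h2 := hray v
    nlinarith
  -- quadratic form identities
  have hSmf : ∀ v : Fin d → ℝ, v ⬝ᵥ ((SigD - P) *ᵥ v) = v ⬝ᵥ (SigD *ᵥ v) - (φ₀ ⬝ᵥ v)^2 := by
    intro v; rw [sub_mulVec, dotProduct_sub, hPdef, vecMulVec_form]
  have hSpf : ∀ v : Fin d → ℝ, v ⬝ᵥ ((SigD + P) *ᵥ v) = v ⬝ᵥ (SigD *ᵥ v) + (φ₀ ⬝ᵥ v)^2 := by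
    intro v; rw [add_mulVec, dotProduct_add, hPdef, vecMulVec_form]
  have hcm : (0:ℝ) < 1 - 1/lamMin := by
    have : 1/lamMin < 1 := by rw [div_lt_one hlam0]; exact hlamMin
    linarith
  have hcp : (0:ℝ) < 1 + 1/lamMin := by positivity
  set X := φ ⬝ᵥ (SigD⁻¹ *ᵥ φ) with hX
  have hX0 : 0 ≤ X := psd_nonneg hSig.inv.posSemidef φ
  -- I1 : Sm ≤ S  ⇒  X ≤ φᵀ Sm⁻¹ φ
  have I1 : X ≤ φ ⬝ᵥ ((SigD - P)⁻¹ *ᵥ φ) := by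
    refine inv_form_mono hSigM hSig (fun v => ?_) φ
    rw [hSmf v]; nlinarith [sq_nonneg (φ₀ ⬝ᵥ v)]
  -- I2 : (1-1/λ)•S ≤ Sm  ⇒  φᵀ Sm⁻¹ φ ≤ (1-1/λ)⁻¹ X
  have I2 : φ ⬝ᵥ ((SigD - P)⁻¹ *ᵥ φ) ≤ (1 - 1/lamMin)⁻¹ * X := by
    have h := inv_form_mono (smul_posDef hSig hcm) hSigM (fun v => ?_) φ
    · rwa [inv_smul_form hSig hcm] at h
    · rw [hSmf v, smul_mulVec, dotProduct_smul, smul_eq_mul]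
      have hk := hkey v
      have h3 : (φ₀ ⬝ᵥ v)^2 ≤ (v ⬝ᵥ (SigD *ᵥ v)) / lamMin := by
        rw [le_div_iff₀ hlam0]; nlinarith
      have he : (1 - 1/lamMin) * (v ⬝ᵥ (SigD *ᵥ v))
          = v ⬝ᵥ (SigD *ᵥ v) - (v ⬝ᵥ (SigD *ᵥ v)) / lamMin := by
        field_simp
      linarith
  -- I3 : Sp ≤ (1+1/λ)•S  ⇒  (1+1/λ)⁻¹ X ≤ φᵀ Sp⁻¹ φ
  have I3 : (1 + 1/lamMin)⁻¹ * X ≤ φ ⬝ᵥ ((SigD + P)⁻¹ *ᵥ φ) := by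
    have h := inv_form_mono hSp (smul_posDef hSig hcp) (fun v => ?_) φ
    · rwa [inv_smul_form hSig hcp] at h
    · rw [hSpf v, smul_mulVec, dotProduct_smul, smul_eq_mul]
      have hk := hkey v
      have h3 : (φ₀ ⬝ᵥ v)^2 ≤ (v ⬝ᵥ (SigD *ᵥ v)) / lamMin := by
        rw [le_div_iff₀ hlam0]; nlinarith
      have he : (1 + 1/lamMin) * (v ⬝ᵥ (SigD *ᵥ v))
          = v ⬝ᵥ (SigD *ᵥ v) + (v ⬝ᵥ (SigD *ᵥ v)) / lamMin := by
        field_simp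
      linarith
  -- I4 : S ≤ Sp  ⇒  φᵀ Sp⁻¹ φ ≤ X
  have I4 : φ ⬝ᵥ ((SigD + P)⁻¹ *ᵥ φ) ≤ X := by
    refine inv_form_mono hSig hSp (fun v => ?_) φ
    rw [hSpf v]; nlinarith [sq_nonneg (φ₀ ⬝ᵥ v)]
  have esqm : Real.sqrt ((1 - 1/lamMin)⁻¹ * X)
      = Real.sqrt X / Real.sqrt (1 - 1/lamMin) := by
    rw [Real.sqrt_mul (by positivity), Real.sqrt_inv, inv_mul_eq_div]
  have esqp : Real.sqrt ((1 + 1/lamMin)⁻¹ * X)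
      = Real.sqrt X / Real.sqrt (1 + 1/lamMin) := by
    rw [Real.sqrt_mul (by positivity), Real.sqrt_inv, inv_mul_eq_div]
  simp only [mnorm]
  refine ⟨Real.sqrt_le_sqrt I1, ?_, ?_, Real.sqrt_le_sqrt I4⟩
  · calc Real.sqrt (φ ⬝ᵥ ((SigD - P)⁻¹ *ᵥ φ))
        ≤ Real.sqrt ((1 - 1/lamMin)⁻¹ * X) := Real.sqrt_le_sqrt I2
    _ = Real.sqrt X / Real.sqrt (1 - 1/lamMin) := esqm
  · calc Real.sqrt X / Real.sqrt (1 + 1/lamMin)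
        = Real.sqrt ((1 + 1/lamMin)⁻¹ * X) := esqp.symm
    _ ≤ Real.sqrt (φ ⬝ᵥ ((SigD + P)⁻¹ *ᵥ φ)) := Real.sqrt_le_sqrt I3
end
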